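/- Let d ≥ 1, ω : Fin d → ℝ injective, and fix ν ≠ 0 such that the mode M_ν := {(x,y) ∈ Fin d × Fin d : ω_x − ω_y = ν} is nonempty. Let P be a real d×d matrix with all entries strictly positive and each column summing to 1. Then: (i) for every (x,y) ∈ M_ν, B_{xy} := (1/2) Σ_{(x',y') ∈ M_ν} (P_{x'|x} + P_{y'|y}) < 1; and (ii) for any complex d×d matrices ρ, σ satisfying |σ_{x'y'}| ≤ Σ_{(x,y) ∈ M_ν} √(P_{x'|x} P_{y'|y}) |ρ_{xy}| for all (x',y') ∈ M_ν, one has Σ_{(x',y') ∈ M_ν} |σ_{x'y'}| ≤ (max_{(x,y) ∈ M_ν} B_{xy}) · Σ_{(x,y) ∈ M_ν} |ρ_{xy}|, a strict contraction of the mode-coherence Σ_{(x,y) ∈ M_ν}|ρ_{xy}| whenever it is nonzero. -/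

import Mathlib

open Matrix Finset

/-- **Strict contraction of mode coherence under strictly positive population transfer.**
For a nonzero mode `M_ν` and a column-stochastic matrix `P` with strictly positive entries,
the factors `B_{xy} = (1/2) Σ_{(x',y') ∈ M_ν} (P_{x'|x} + P_{y'|y})` are strictly below `1`,
and any pair `(ρ, σ)` obeying the covariant decoherence bound entrywise on the mode
satisfies `Σ_{M_ν} |σ| ≤ (max B) Σ_{M_ν} |ρ|`, a strict contraction. -/
theorem mode_coherence_strict_contraction
    (d : ℕ) (hd : 1 ≤ d) (ω : Fin d → ℝ) (hω : Function.Injective ω)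
    (ν : ℝ) (hν : ν ≠ 0)
    (Mν : Finset (Fin d × Fin d))
    (hMν : Mν = Finset.univ.filter (fun p : Fin d × Fin d => ω p.1 - ω p.2 = ν))
    (hne : Mν.Nonempty)
    (P : Matrix (Fin d) (Fin d) ℝ)
    (hPpos : ∀ x' x, 0 < P x' x)
    (hPcol : ∀ x, ∑ x', P x' x = 1)
    (B : Fin d × Fin d → ℝ)
    (hB : ∀ p, B p = (1 / 2) * ∑ q ∈ Mν, (P q.1 p.1 + P q.2 p.2)) :
    (∀ p ∈ Mν, B p < 1) ∧
    (∀ ρ σ : Matrix (Fin d) (Fin d) ℂ,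
      (∀ p ∈ Mν, ‖σ p.1 p.2‖ ≤
        ∑ q ∈ Mν, Real.sqrt (P p.1 q.1 * P p.2 q.2) * ‖ρ q.1 q.2‖) →
      ∑ p ∈ Mν, ‖σ p.1 p.2‖ ≤
        (Mν.sup' hne B) * ∑ p ∈ Mν, ‖ρ p.1 p.2‖) := by
  have hinj1 : Set.InjOn Prod.fst (Mν : Set (Fin d × Fin d)) := by
    intro q hq q' hq' h
    simp only [hMν, coe_filter, Set.mem_setOf_eq] at hq hq'
    have : ω q.2 = ω q'.2 := by
      have := hq.2; have := hq'.2
      rw [h] at *; linarith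
    exact Prod.ext h (hω this)
  have hinj2 : Set.InjOn Prod.snd (Mν : Set (Fin d × Fin d)) := by
    intro q hq q' hq' h
    simp only [hMν, coe_filter, Set.mem_setOf_eq] at hq hq'
    have : ω q.1 = ω q'.1 := by
      have := hq.2; have := hq'.2
      rw [h] at *; linarith
    exact Prod.ext (hω this) h
  -- a missing first coordinate
  obtain ⟨x₀, -, hx₀⟩ := Finset.exists_min_image (univ : Finset (Fin d)) ω
    ⟨⟨0, hd⟩, mem_univ _⟩
  obtain ⟨x₁, -, hx₁⟩ := Finset.exists_max_image (univ : Finset (Fin d)) ω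
    ⟨⟨0, hd⟩, mem_univ _⟩
  have hmiss : ∃ z : Fin d, ∀ q ∈ Mν, q.1 ≠ z := by
    rcases lt_or_gt_of_ne hν with hlt | hgt
    · refine ⟨x₁, fun q hq h => ?_⟩
      rw [hMν, mem_filter] at hq
      have := hx₁ q.2 (mem_univ _)
      rw [h] at hq; linarith [hq.2]
    · refine ⟨x₀, fun q hq h => ?_⟩
      rw [hMν, mem_filter] at hq
      have := hx₀ q.2 (mem_univ _)
      rw [h] at hq; linarith [hq.2]
  obtain ⟨z, hz⟩ := hmiss
  have hS1 : ∀ x, ∑ q ∈ Mν, P q.1 x < 1 := by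
    intro x
    have he : ∑ q ∈ Mν, P q.1 x = ∑ x' ∈ Mν.image Prod.fst, P x' x :=
      (Finset.sum_image (f := fun x' => P x' x)
        (fun q hq q' hq' h => hinj1 hq hq' h)).symm
    rw [he, ← hPcol x]
    refine Finset.sum_lt_sum_of_subset (subset_univ _) (mem_univ z) ?_
      (hPpos z x) (fun j _ _ => (hPpos j x).le)
    simp only [mem_image]
    rintro ⟨q, hq, hq1⟩
    exact hz q hq hq1
  have hS2 : ∀ y, ∑ q ∈ Mν, P q.2 y ≤ 1 := by
    intro y
    have he : ∑ q ∈ Mν, P q.2 y = ∑ y' ∈ Mν.image Prod.snd, P y' y :=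
      (Finset.sum_image (f := fun y' => P y' y)
        (fun q hq q' hq' h => hinj2 hq hq' h)).symm
    rw [he, ← hPcol y]
    exact Finset.sum_le_sum_of_subset_of_nonneg (subset_univ _)
      (fun j _ _ => (hPpos j y).le)
  have hBlt : ∀ p ∈ Mν, B p < 1 := by
    intro p hp
    rw [hB, Finset.sum_add_distrib]
    have := hS1 p.1
    have := hS2 p.2
    linarith
  refine ⟨hBlt, fun ρ σ hσ => ?_⟩
  calc ∑ p ∈ Mν, ‖σ p.1 p.2‖
      ≤ ∑ p ∈ Mν, ∑ q ∈ Mν, Real.sqrt (P p.1 q.1 * P p.2 q.2) * ‖ρ q.1 q.2‖ :=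
        Finset.sum_le_sum hσ
    _ = ∑ q ∈ Mν, (∑ p ∈ Mν, Real.sqrt (P p.1 q.1 * P p.2 q.2)) * ‖ρ q.1 q.2‖ := by
        rw [Finset.sum_comm]
        simp [Finset.sum_mul]
    _ ≤ ∑ q ∈ Mν, B q * ‖ρ q.1 q.2‖ := by
        refine Finset.sum_le_sum fun q hq => ?_
        refine mul_le_mul_of_nonneg_right ?_ (norm_nonneg _)
        rw [hB, Finset.mul_sum]
        refine Finset.sum_le_sum fun p hp => ?_
        have ha := (hPpos p.1 q.1).le
        have hb := (hPpos p.2 q.2).le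
        rw [Real.sqrt_mul ha]
        nlinarith [sq_nonneg (Real.sqrt (P p.1 q.1) - Real.sqrt (P p.2 q.2)),
          Real.sq_sqrt ha, Real.sq_sqrt hb, Real.sqrt_nonneg (P p.1 q.1),
          Real.sqrt_nonneg (P p.2 q.2)]
    _ ≤ ∑ q ∈ Mν, (Mν.sup' hne B) * ‖ρ q.1 q.2‖ := by
        refine Finset.sum_le_sum fun q hq => ?_
        exact mul_le_mul_of_nonneg_right (Finset.le_sup' B hq) (norm_nonneg _)
    _ = (Mν.sup' hne B) * ∑ p ∈ Mν, ‖ρ p.1 p.2‖ := by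
        rw [Finset.mul_sum]
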